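/- Let n ≥ 1, let M ∈ M_{n×n}(ℤ) be symmetric and positive definite, let B ∈ M_{n×n}(ℤ), and let w, s ∈ ℤⁿ with each sᵢ ≠ 0. Set s = gcd(s₁, s₂, …, sₙ) and assume gcd(det B, s) = 1 and gcd(a, s) = 1 for an integer a. Then for every integer k with gcd(s, k) > 1, there is no x ∈ ℤⁿ with Bx ≡ kw (mod s) (componentwise, sᵢ dividing each coordinate of Bx − kw) and xᵗMx = a. -/

import Mathlib

open Matrix

theorem stmt_10 (n : ℕ) (hn : 1 ≤ n)
    (M B : Matrix (Fin n) (Fin n) ℤ)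
    (hMsymm : M.IsSymm)
    (hMpos : ∀ x : Fin n → ℤ, x ≠ 0 → 0 < x ⬝ᵥ M.mulVec x)
    (w s : Fin n → ℤ) (hs : ∀ i, s i ≠ 0)
    (a : ℤ)
    -- `gcd(det B, s) = 1` and `gcd(a, s) = 1`, where `s = gcd(s₁,…,sₙ)`:
    (hB : Int.gcd B.det (Finset.univ.gcd s) = 1)
    (ha : Int.gcd a (Finset.univ.gcd s) = 1) :
    ∀ k : ℤ, 1 < Int.gcd (Finset.univ.gcd s) k →
      ¬∃ x : Fin n → ℤ,
        (∀ i, s i ∣ (B.mulVec x - k • w) i) ∧ x ⬝ᵥ M.mulVec x = a := by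
  intro k hk
  rintro ⟨x, hcong, hquad⟩
  set S : ℤ := Finset.univ.gcd s with hS
  -- take a prime p dividing gcd(S, k)
  obtain ⟨p, hp, hpd⟩ := Nat.exists_prime_and_dvd (n := Int.gcd S k) (by omega)
  have hpS : (p : ℤ) ∣ S := dvd_trans (Int.natCast_dvd_natCast.mpr hpd) (Int.gcd_dvd_left _ _)
  have hpk : (p : ℤ) ∣ k := dvd_trans (Int.natCast_dvd_natCast.mpr hpd) (Int.gcd_dvd_right _ _)
  have hpP : Prime (p : ℤ) := Nat.prime_iff_prime_int.mp hp
  -- p divides every coordinate of B x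
  have hBx : ∀ i, (p : ℤ) ∣ B.mulVec x i := by
    intro i
    have h1 : (p : ℤ) ∣ s i := hpS.trans (Finset.gcd_dvd (Finset.mem_univ i))
    have h2 : (p : ℤ) ∣ (B.mulVec x - k • w) i := h1.trans (hcong i)
    have h3 : (p : ℤ) ∣ k * w i := hpk.mul_right _
    have : (B.mulVec x) i = ((B.mulVec x - k • w) i) + k * w i := by
      simp [Pi.sub_apply, smul_eq_mul]
    rw [this]; exact dvd_add h2 h3
  -- hence p divides (det B) * x i via adjugate
  have hdetx : ∀ i, (p : ℤ) ∣ B.det * x i := by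
    intro i
    have : (B.adjugate).mulVec (B.mulVec x) = B.det • x := by
      rw [mulVec_mulVec, Matrix.adjugate_mul, smul_mulVec, one_mulVec]
    have h4 : (p : ℤ) ∣ (B.adjugate).mulVec (B.mulVec x) i := by
      unfold Matrix.mulVec dotProduct
      exact Finset.dvd_sum fun j _ => Dvd.dvd.mul_left (hBx j) _
    rw [this] at h4
    simpa using h4
  -- p does not divide det B
  have hpdet : ¬ (p : ℤ) ∣ B.det := by
    intro h
    have : (p : ℤ) ∣ (Int.gcd B.det S : ℤ) := Int.dvd_coe_gcd h hpS
    rw [hB] at this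
    exact hpP.not_unit (isUnit_of_dvd_one (by exact_mod_cast this))
  have hpx : ∀ i, (p : ℤ) ∣ x i := fun i =>
    ((hpP.dvd_mul.mp (hdetx i)).resolve_left hpdet)
  -- then p divides a = x ⬝ M x
  have hpa : (p : ℤ) ∣ a := by
    rw [← hquad]
    unfold dotProduct
    exact Finset.dvd_sum fun i _ => (hpx i).mul_right _
  have : (p : ℤ) ∣ (Int.gcd a S : ℤ) := Int.dvd_coe_gcd hpa hpS
  rw [ha] at this
  exact hpP.not_unit (isUnit_of_dvd_one (by exact_mod_cast this))
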